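/- Fix integers d ≥ 2 and n ≥ 1. For every binary array a = (a_{y,i}) ∈ {0,1}^{{1,...,n}×{1,...,d−1}}, the quantity h_n(a) satisfies the identity h_n(a) = 1 + Σ_{x=1}^n Σ_{j=1}^{d−1} Σ_{y=1}^n Σ_{i=1}^{d−1} (1 − a_{x,j}) a_{y,i} d^{−|x−y|−1} + (d−1) Σ_{x=1}^n Σ_{i=1}^{d−1} a_{x,i} d^{x−n−1}. -/
import Mathlib

open Finset

lemma geom_aux (d : ℕ) (n : ℕ) :
    ((d:ℝ) - 1) * ∑ x ∈ Icc 1 n, (d:ℝ) ^ x = (d:ℝ)^(n+1) - d := by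
  induction n with
  | zero => simp
  | succ n ih =>
    rw [Finset.sum_Icc_succ_top (by omega), mul_add, ih]
    ring

lemma key_geom (d n : ℕ) (hd : 2 ≤ d) :
    ((d:ℝ) - 1) * ∑ x ∈ Icc 1 n, (d:ℝ) ^ ((x:ℤ) - n - 1) = 1 - (d:ℝ) ^ (-(n:ℤ)) := by
  have hD : (d:ℝ) ≠ 0 := Nat.cast_ne_zero.mpr (by omega)
  have h : ∀ x : ℕ, (d:ℝ) ^ ((x:ℤ) - n - 1) = (d:ℝ)^x * (d:ℝ)^(-(n:ℤ)-1) := by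
    intro x
    rw [← zpow_natCast (d:ℝ) x, ← zpow_add₀ hD]
    ring_nf
  rw [Finset.sum_congr rfl (fun x _ => h x), ← Finset.sum_mul, ← mul_assoc, geom_aux,
    sub_mul, ← zpow_natCast (d:ℝ) (n+1), ← zpow_add₀ hD]
  nth_rewrite 2 [← zpow_one (d:ℝ)]
  rw [← zpow_add₀ hD]
  push_cast
  have e1 : ((n:ℤ)+1) + (-(n:ℤ)-1) = 0 := by ring
  have e2 : (1:ℤ) + (-(n:ℤ)-1) = -n := by ring
  rw [e1, e2, zpow_zero]


/-- For integers `d ≥ 2`, `n ≥ 1` and a binary array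
`a = (a_{y,i})` indexed by `{1,…,n} × {1,…,d-1}`, the quantity `h_n(a)` equals
`1 + Σ_{x,j} Σ_{y,i} (1 - a_{x,j}) a_{y,i} d^{-|x-y|-1}
   + (d-1) Σ_{x,i} a_{x,i} d^{x-n-1}`. -/
theorem h_expand
    (d n : ℕ) (hd : 2 ≤ d) (hn : 1 ≤ n)
    (a : ℕ → ℕ → ℝ)
    (ha : ∀ y ∈ Finset.Icc 1 n, ∀ i ∈ Finset.Icc 1 (d - 1), a y i = 0 ∨ a y i = 1) :
    (d : ℝ) ^ (-(n : ℤ))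
      + ∑ y ∈ Finset.Icc 1 n, ∑ i ∈ Finset.Icc 1 (d - 1),
          a y i * (d : ℝ) ^ ((y : ℤ) - (n : ℤ))
      + ∑ x ∈ Finset.Icc 1 n, ∑ j ∈ Finset.Icc 1 (d - 1),
          (1 - a x j) * ((d : ℝ) ^ ((x : ℤ) - (n : ℤ) - 1)
            + ∑ y ∈ Finset.Icc 1 n, ∑ i ∈ Finset.Icc 1 (d - 1),
                a y i * (d : ℝ) ^ (-|(y : ℤ) - (x : ℤ)| - 1))
    = 1
      + ∑ x ∈ Finset.Icc 1 n, ∑ j ∈ Finset.Icc 1 (d - 1),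
          ∑ y ∈ Finset.Icc 1 n, ∑ i ∈ Finset.Icc 1 (d - 1),
            (1 - a x j) * a y i * (d : ℝ) ^ (-|(x : ℤ) - (y : ℤ)| - 1)
      + ((d : ℝ) - 1) * ∑ x ∈ Finset.Icc 1 n, ∑ i ∈ Finset.Icc 1 (d - 1),
          a x i * (d : ℝ) ^ ((x : ℤ) - (n : ℤ) - 1) := by
  have hD : (d:ℝ) ≠ 0 := Nat.cast_ne_zero.mpr (by omega)
  set A : ℝ := ∑ x ∈ Icc 1 n, ∑ i ∈ Icc 1 (d-1), a x i * (d:ℝ) ^ ((x:ℤ) - n - 1) with hA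
  set C : ℝ := ∑ x ∈ Icc 1 n, ∑ j ∈ Icc 1 (d-1), ∑ y ∈ Icc 1 n, ∑ i ∈ Icc 1 (d-1),
      (1 - a x j) * a y i * (d:ℝ) ^ (-|(x:ℤ) - y| - 1) with hC
  set G : ℝ := ∑ x ∈ Icc 1 n, (d:ℝ) ^ ((x:ℤ) - n - 1) with hG
  have hcard : ((Icc 1 (d-1)).card : ℝ) = (d:ℝ) - 1 := by
    rw [Nat.card_Icc]
    have : d - 1 + 1 - 1 = d - 1 := by omega
    rw [this, Nat.cast_sub (by omega)]
    norm_num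
  have h1 : ∑ y ∈ Icc 1 n, ∑ i ∈ Icc 1 (d-1), a y i * (d:ℝ) ^ ((y:ℤ) - n)
      = (d:ℝ) * A := by
    rw [hA, Finset.mul_sum]
    refine Finset.sum_congr rfl fun y _ => ?_
    rw [Finset.mul_sum]
    refine Finset.sum_congr rfl fun i _ => ?_
    rw [show (y:ℤ) - n = ((y:ℤ) - n - 1) + 1 from by ring, zpow_add₀ hD, zpow_one]
    ring
  have h2 : ∑ x ∈ Icc 1 n, ∑ j ∈ Icc 1 (d-1),
      (1 - a x j) * ((d:ℝ) ^ ((x:ℤ) - n - 1)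
        + ∑ y ∈ Icc 1 n, ∑ i ∈ Icc 1 (d-1), a y i * (d:ℝ) ^ (-|(y:ℤ) - x| - 1))
      = ((d:ℝ) - 1) * G - A + C := by
    have step : ∀ x ∈ Icc 1 n, ∀ j ∈ Icc 1 (d-1),
        (1 - a x j) * ((d:ℝ) ^ ((x:ℤ) - n - 1)
          + ∑ y ∈ Icc 1 n, ∑ i ∈ Icc 1 (d-1), a y i * (d:ℝ) ^ (-|(y:ℤ) - x| - 1))
        = ((d:ℝ) ^ ((x:ℤ) - n - 1) - a x j * (d:ℝ) ^ ((x:ℤ) - n - 1))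
          + ∑ y ∈ Icc 1 n, ∑ i ∈ Icc 1 (d-1),
              (1 - a x j) * a y i * (d:ℝ) ^ (-|(x:ℤ) - y| - 1) := by
      intro x _ j _
      rw [mul_add]
      congr 1
      · ring
      · rw [Finset.mul_sum]
        refine Finset.sum_congr rfl fun y _ => ?_
        rw [Finset.mul_sum]
        refine Finset.sum_congr rfl fun i _ => ?_
        rw [abs_sub_comm (y:ℤ) (x:ℤ)]
        ring
    calc ∑ x ∈ Icc 1 n, ∑ j ∈ Icc 1 (d-1),
        (1 - a x j) * ((d:ℝ) ^ ((x:ℤ) - n - 1)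
          + ∑ y ∈ Icc 1 n, ∑ i ∈ Icc 1 (d-1), a y i * (d:ℝ) ^ (-|(y:ℤ) - x| - 1))
        = ∑ x ∈ Icc 1 n, ∑ j ∈ Icc 1 (d-1),
          (((d:ℝ) ^ ((x:ℤ) - n - 1) - a x j * (d:ℝ) ^ ((x:ℤ) - n - 1))
            + ∑ y ∈ Icc 1 n, ∑ i ∈ Icc 1 (d-1),
                (1 - a x j) * a y i * (d:ℝ) ^ (-|(x:ℤ) - y| - 1)) := by
          exact Finset.sum_congr rfl fun x hx => Finset.sum_congr rfl fun j hj => step x hx j hj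
      _ = ((d:ℝ) - 1) * G - A + C := by
          simp only [Finset.sum_add_distrib, Finset.sum_sub_distrib, hA, hC, hG,
            Finset.sum_const, nsmul_eq_mul, hcard, Finset.mul_sum]
  rw [h1, h2]
  have hk := key_geom d n hd
  linarith
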